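/- Let u solve the backward heat equation with drift, −∂_t u − Δu + V(t,x)·Du = f(t,x) on (t₀,T) × ℝ^d with u(T,·) = g, where V is bounded, and suppose that f(t,·) and g are L-Lipschitz in x uniformly in t, and V is K-Lipschitz in x uniformly in t. Then u(t,·) is Lipschitz in x for each t, with Lipschitz constant bounded by a constant depending only on L, K, ‖V‖_∞ and T − t₀ (via a maximum-principle/Feynman–Kac argument). -/

import Mathlib

noncomputable section
open MeasureTheory RealInnerProductSpace Set Filter Topology Bornology

set_option linter.unusedSectionVars false
set_option linter.unusedVariables false
set_option maxHeartbeats 2000000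

section aux
variable {E : Type*} [NormedAddCommGroup E] [InnerProductSpace ℝ E] [CompleteSpace E]

/-- inner with gradient equals fderiv applied -/
lemma inner_grad (f : E → ℝ) (x v : E) : ⟪v, gradient f x⟫ = fderiv ℝ f x v := by
  rw [real_inner_comm]
  have h : (InnerProductSpace.toDual ℝ E) (gradient f x) = fderiv ℝ f x :=
    (InnerProductSpace.toDual ℝ E).apply_symm_apply _
  calc ⟪gradient f x, v⟫ = (InnerProductSpace.toDual ℝ E) (gradient f x) v :=
        (InnerProductSpace.toDual_apply_apply ..).symm
    _ = fderiv ℝ f x v := by rw [h]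

lemma norm_add_smul_sq (a v : E) (s : ℝ) :
    ‖a + s • v‖ ^ 2 = ‖a‖ ^ 2 + (2 * ⟪a, v⟫) * s + ‖v‖ ^ 2 * s ^ 2 := by
  rw [norm_add_sq_real, real_inner_smul_right, norm_smul]
  simp only [Real.norm_eq_abs, mul_pow, sq_abs]
  ring

lemma hasDerivAt_line {F : Type*} [NormedAddCommGroup F] [NormedSpace ℝ F]
    (f : E → F) (x v : E) (s₀ : ℝ) (hf : DifferentiableAt ℝ f (x + s₀ • v)) :
    HasDerivAt (fun s : ℝ => f (x + s • v)) (fderiv ℝ f (x + s₀ • v) v) s₀ := by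
  have hline : HasDerivAt (fun s : ℝ => x + s • v) v s₀ := by
    simpa using ((hasDerivAt_id s₀).smul_const v).const_add x
  exact hf.hasFDerivAt.comp_hasDerivAt s₀ hline

lemma hasDerivAt_line2 (f : E → ℝ) (hf : ContDiff ℝ 2 f) (x v : E) :
    HasDerivAt (fun s : ℝ => fderiv ℝ f (x + s • v) v)
      (iteratedFDeriv ℝ 2 f x ![v, v]) 0 := by
  have hF : ContDiff ℝ 1 (fderiv ℝ f) := hf.fderiv_right (le_refl _)
  have h1 : HasDerivAt (fun s : ℝ => fderiv ℝ f (x + s • v))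
      (fderiv ℝ (fderiv ℝ f) (x + (0:ℝ) • v) v) 0 :=
    hasDerivAt_line _ x v 0 ((hF.differentiable one_ne_zero).differentiableAt)
  have h2 := (ContinuousLinearMap.apply ℝ ℝ v).hasFDerivAt.comp_hasDerivAt 0 h1
  have : iteratedFDeriv ℝ 2 f x ![v, v] = fderiv ℝ (fderiv ℝ f) x v v := by
    rw [iteratedFDeriv_two_apply]; simp
  rw [this]
  simpa [Function.comp_def] using h2
end aux

/-- at a local max of a C² function, the second derivative is ≤ 0 -/
lemma second_deriv_nonpos_at_max {φ D1 : ℝ → ℝ} {c : ℝ}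
    (hD : ∀ s, HasDerivAt φ (D1 s) s) (h2 : HasDerivAt D1 c 0)
    (hmax : IsLocalMax φ 0) : c ≤ 0 := by
  by_contra hc
  push_neg at hc
  have h10 : D1 0 = 0 := hmax.hasDerivAt_eq_zero (hD 0)
  have hslope : Tendsto (slope D1 0) (𝓝[>] (0:ℝ)) (𝓝 c) :=
    (hasDerivAt_iff_tendsto_slope.1 h2).mono_left
      (nhdsWithin_mono _ fun s hs => ne_of_gt hs)
  have hev : ∀ᶠ s in 𝓝[>] (0:ℝ), 0 < slope D1 0 s :=
    hslope.eventually (eventually_gt_nhds hc)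
  obtain ⟨η, hη, hsub⟩ := mem_nhdsGT_iff_exists_Ioo_subset.1 hev
  have hD1pos : ∀ s ∈ Ioo (0:ℝ) η, 0 < D1 s := by
    intro s hs
    have h := hsub hs
    simp only [mem_setOf_eq, slope_def_field] at h
    rw [h10] at h
    have h' : 0 < (D1 s) / s := by simpa using h
    exact (div_pos_iff.1 h').resolve_right
      (fun h'' => absurd hs.1 (not_lt.2 h''.2.le)) |>.1
  have hmono : StrictMonoOn φ (Icc 0 η) := by
    apply strictMonoOn_of_deriv_pos (convex_Icc _ _)
    · exact fun s _ => (hD s).continuousAt.continuousWithinAt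
    · intro s hs
      rw [interior_Icc] at hs
      rw [(hD s).deriv]
      exact hD1pos s hs
  have hIoo : Ioo (0:ℝ) η ∈ 𝓝[>] (0:ℝ) := Ioo_mem_nhdsGT_of_mem ⟨le_refl _, hη⟩
  have hev2 : ∀ᶠ s in 𝓝[>] (0:ℝ), φ s ≤ φ 0 := hmax.filter_mono nhdsWithin_le_nhds
  obtain ⟨s, hs1, hs2⟩ := (hev2.and (eventually_mem_set.2 hIoo)).exists
  have : φ 0 < φ s := hmono ⟨le_refl _, hη.le⟩ ⟨hs2.1.le, hs2.2.le⟩ hs2.1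
  linarith

/-- if φ has a max at the left end of an interval, its derivative there is ≤ 0 -/
lemma right_deriv_nonpos {φ : ℝ → ℝ} {c a b : ℝ} (hab : a < b)
    (h : HasDerivAt φ c a) (hmax : ∀ s ∈ Icc a b, φ s ≤ φ a) : c ≤ 0 := by
  have hs : Tendsto (slope φ a) (𝓝[>] a) (𝓝 c) :=
    (hasDerivAt_iff_tendsto_slope.1 h).mono_left
      (nhdsWithin_mono _ fun s hs => ne_of_gt hs)
  refine le_of_tendsto hs ?_
  filter_upwards [Ioc_mem_nhdsGT_of_mem ⟨le_refl a, hab⟩] with s hs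
  rw [slope_def_field]
  have h1 : φ s - φ a ≤ 0 := by
    have := hmax s ⟨hs.1.le, hs.2⟩; linarith
  have h2 : 0 < s - a := by linarith [hs.1]
  exact div_nonpos_of_nonpos_of_nonneg h1 h2.le

lemma hasDerivAt_quad (a b c s : ℝ) :
    HasDerivAt (fun s : ℝ => a + b * s + c * s^2) (b + c * (2 * s)) s := by
  have h1 : HasDerivAt (fun s : ℝ => b * s) b s := by
    simpa using (hasDerivAt_id s).const_mul b
  have h2 : HasDerivAt (fun s : ℝ => c * s^2) (c * (2 * s)) s := by
    simpa using (hasDerivAt_pow 2 s).const_mul c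
  exact (h1.const_add a).add h2

/-- The comparison amplitude function. -/
noncomputable def Afun (L K T t : ℝ) : ℝ :=
  (L + (L + 1) * (T - t)) * Real.exp (K * (T - t))

lemma Afun_hasDerivAt (L K T t : ℝ) :
    HasDerivAt (fun s => Afun L K T s)
      (-((L + 1) + K * (L + (L + 1) * (T - t))) * Real.exp (K * (T - t))) t := by
  have h1 : HasDerivAt (fun s : ℝ => T - s) (-1) t := by
    simpa using (hasDerivAt_id t).const_sub T
  have hp : HasDerivAt (fun s : ℝ => L + (L + 1) * (T - s)) ((L+1) * (-1)) t :=
    (h1.const_mul (L+1)).const_add L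
  have hq : HasDerivAt (fun s : ℝ => Real.exp (K * (T - s)))
      (Real.exp (K * (T - t)) * (K * (-1))) t := (h1.const_mul K).exp
  have := hp.mul hq
  refine this.congr_deriv ?_
  ring

lemma Afun_nonneg {L K T t : ℝ} (hL : 0 ≤ L) (hK : 0 ≤ K) (ht : t ≤ T) :
    0 ≤ Afun L K T t := by
  unfold Afun
  have h3 : 0 ≤ L + (L + 1) * (T - t) := by nlinarith
  exact mul_nonneg h3 (Real.exp_pos _).le

lemma Afun_T (L K T : ℝ) : Afun L K T T = L := by simp [Afun]

lemma Afun_le {L K T t t₀ : ℝ} (hL : 0 ≤ L) (hK : 0 ≤ K) (ht : t₀ ≤ t) (hT : t ≤ T) :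
    Afun L K T t ≤ Afun L K T t₀ := by
  unfold Afun
  have h1 : Real.exp (K * (T - t)) ≤ Real.exp (K * (T - t₀)) := by
    apply Real.exp_le_exp.2; nlinarith
  have h2 : 0 < Real.exp (K * (T - t)) := Real.exp_pos _
  have h3 : 0 ≤ L + (L + 1) * (T - t) := by nlinarith
  have h4 : L + (L + 1) * (T - t) ≤ L + (L + 1) * (T - t₀) := by nlinarith
  nlinarith

lemma Afun_deriv_key {L K T t : ℝ} (hL : 0 ≤ L) (hK : 0 ≤ K) (ht : t ≤ T) :
    -((L + 1) + K * (L + (L + 1) * (T - t))) * Real.exp (K * (T - t))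
      ≤ -(K * Afun L K T t + L + 1) := by
  unfold Afun
  have he : 1 ≤ Real.exp (K * (T - t)) := Real.one_le_exp (by nlinarith)
  nlinarith [Real.exp_pos (K * (T - t)),
    mul_nonneg hK (mul_nonneg (by nlinarith : (0:ℝ) ≤ L + (L+1)*(T-t))
      (sub_nonneg.2 he))]

/-- The Laplacian of `φ : ℝ^d → ℝ` at `x`, as the trace of the second derivative. -/
def lapl {d : ℕ} (φ : EuclideanSpace ℝ (Fin d) → ℝ) (x : EuclideanSpace ℝ (Fin d)) : ℝ :=
  ∑ i, iteratedFDeriv ℝ 2 φ x ![EuclideanSpace.single i 1, EuclideanSpace.single i 1]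

/-- Let `u` be a bounded classical solution of
`-∂_t u - Δu + V·Du = f` on `(t₀,T) × ℝ^d`, `u(T,·) = g`, with `V` bounded and `K`-Lipschitz in
`x`, and `f(t,·)`, `g` `L`-Lipschitz in `x` uniformly in `t`. Then `u(t,·)` is Lipschitz for each
`t ∈ [t₀,T]`, with constant depending only on `L`, `K`, `‖V‖_∞` and `T - t₀`. -/
theorem stmt7 (d : ℕ) (t₀ T L K M : ℝ) (ht : t₀ < T) (hL : 0 ≤ L) (hK : 0 ≤ K) (hM : 0 ≤ M) :
    ∃ C : ℝ, 0 < C ∧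
      ∀ (V : ℝ → EuclideanSpace ℝ (Fin d) → EuclideanSpace ℝ (Fin d))
        (f : ℝ → EuclideanSpace ℝ (Fin d) → ℝ)
        (g : EuclideanSpace ℝ (Fin d) → ℝ)
        (u ut : ℝ → EuclideanSpace ℝ (Fin d) → ℝ) (Cb : ℝ),
        (∀ t x, ‖V t x‖ ≤ M) →
        (∀ t ∈ Set.Icc t₀ T, ∀ x y, ‖V t x - V t y‖ ≤ K * ‖x - y‖) →
        (∀ t ∈ Set.Icc t₀ T, ∀ x y, |f t x - f t y| ≤ L * ‖x - y‖) →
        (∀ x y, |g x - g y| ≤ L * ‖x - y‖) →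
        (∀ t x, |u t x| ≤ Cb) →
        (Continuous fun q : ℝ × EuclideanSpace ℝ (Fin d) => u q.1 q.2) →
        (∀ t ∈ Set.Ioo t₀ T, ContDiff ℝ 2 (u t)) →
        (∀ t ∈ Set.Ioo t₀ T, ∀ x, HasDerivAt (fun s => u s x) (ut t x) t) →
        (∀ t ∈ Set.Ioo t₀ T, ∀ x,
          -(ut t x) - lapl (u t) x + ⟪V t x, gradient (u t) x⟫ = f t x) →
        (∀ x, u T x = g x) →
        ∀ t ∈ Set.Icc t₀ T, ∀ x y, |u t x - u t y| ≤ C * ‖x - y‖ := by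
  have hAm : (0:ℝ) ≤ Afun L K T t₀ := Afun_nonneg hL hK ht.le
  refine ⟨Afun L K T t₀ + 1, by linarith, ?_⟩
  intro V f g u ut Cb hVb hVK hfL hgL hub hucont hu2 hut hpde huT
  have hCb : 0 ≤ Cb := le_trans (abs_nonneg _) (hub T 0)
  set Am := Afun L K T t₀ with hAmdef
  -- the key one-sided estimate
  have key : ∀ t ∈ Set.Ioo t₀ T, ∀ x y : EuclideanSpace ℝ (Fin d),
      u t x - u t y ≤ Am * ‖x - y‖ := by
    intro t₁ ht₁ x₀ y₀
    suffices hsuff : ∀ η > 0, u t₁ x₀ - u t₁ y₀ ≤ Am * ‖x₀ - y₀‖ + η by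
      by_contra hcon
      push_neg at hcon
      have h2 := hsuff ((u t₁ x₀ - u t₁ y₀ - Am * ‖x₀ - y₀‖) / 2) (by linarith)
      linarith
    intro η hη
    set δ := min 1 (η / (2 * (Am + 1))) with hδdef
    have hδ0 : 0 < δ := lt_min one_pos (by positivity)
    have hδ1 : δ ≤ 1 := min_le_left _ _
    have hδη : δ ≤ η / (2 * (Am + 1)) := min_le_right _ _
    set B := 2 * Cb + L + 1 with hBdef
    have hB : 0 < B := by simp only [hBdef]; linarith
    set ε := min (δ / (8 * (d:ℝ) + 8))
      (min (δ^2 / (64 * (M+1)^2 * B)) (η / (2 * (‖x₀‖^2 + ‖y₀‖^2 + 1)))) with hεdef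
    have hε0 : 0 < ε := lt_min (by positivity) (lt_min (by positivity) (by positivity))
    have hε1 : ε ≤ δ / (8 * (d:ℝ) + 8) := min_le_left _ _
    have hε2 : ε ≤ δ^2 / (64 * (M+1)^2 * B) := le_trans (min_le_right _ _) (min_le_left _ _)
    have hε3 : ε ≤ η / (2 * (‖x₀‖^2 + ‖y₀‖^2 + 1)) :=
      le_trans (min_le_right _ _) (min_le_right _ _)
    set Φ : ℝ × (EuclideanSpace ℝ (Fin d) × EuclideanSpace ℝ (Fin d)) → ℝ :=
      fun p => u p.1 p.2.1 - u p.1 p.2.2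
        - Afun L K T p.1 * Real.sqrt (δ^2 + ‖p.2.1 - p.2.2‖^2)
        - ε * (‖p.2.1‖^2 + ‖p.2.2‖^2) with hΦdef
    have hAcont : Continuous (fun s : ℝ => Afun L K T s) := by
      unfold Afun; fun_prop
    have hΦcont : Continuous Φ := by
      rw [hΦdef]
      refine Continuous.sub (Continuous.sub (Continuous.sub ?_ ?_) ?_) ?_
      · exact hucont.comp (continuous_fst.prodMk continuous_snd.fst)
      · exact hucont.comp (continuous_fst.prodMk continuous_snd.snd)
      · exact (hAcont.comp continuous_fst).mul (Real.continuous_sqrt.comp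
          (continuous_const.add ((continuous_snd.fst.sub continuous_snd.snd).norm.pow 2)))
      · exact continuous_const.mul ((continuous_snd.fst.norm.pow 2).add
          (continuous_snd.snd.norm.pow 2))
    have hm₀ : Φ (T, (0, 0)) = -(L * δ) := by
      simp only [hΦdef, sub_self, sub_zero, norm_zero, Afun_T]
      rw [show (0:ℝ)^2 = 0 by ring]
      rw [add_zero, Real.sqrt_sq hδ0.le]
      ring
    set S := {p : ℝ × (EuclideanSpace ℝ (Fin d) × EuclideanSpace ℝ (Fin d)) |
        p.1 ∈ Icc t₁ T ∧ Φ (T, (0, 0)) ≤ Φ p} with hSdef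
    have hTS : ((T, ((0 : EuclideanSpace ℝ (Fin d)), (0 : EuclideanSpace ℝ (Fin d)))) ∈ S) :=
      ⟨⟨ht₁.2.le, le_refl T⟩, le_refl _⟩
    have hSclosed : IsClosed S :=
      (isClosed_Icc.preimage continuous_fst).inter (isClosed_le continuous_const hΦcont)
    set R := Real.sqrt ((2 * Cb + L * δ) / ε) with hRdef
    have hR0 : 0 ≤ R := Real.sqrt_nonneg _
    have hnormbound : ∀ p ∈ S, ‖p.2.1‖ ≤ R ∧ ‖p.2.2‖ ≤ R := by
      rintro ⟨s, a, b⟩ ⟨hs, hΦp⟩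
      rw [hm₀] at hΦp
      simp only [hΦdef] at hΦp
      have hA0 : 0 ≤ Afun L K T s := Afun_nonneg hL hK hs.2
      have hsq : 0 ≤ Real.sqrt (δ^2 + ‖a - b‖^2) := Real.sqrt_nonneg _
      have h1 := abs_le.1 (hub s a)
      have h2 := abs_le.1 (hub s b)
      have hab : ε * (‖a‖^2 + ‖b‖^2) ≤ 2*Cb + L*δ := by
        linarith only [hΦp, h1.1, h1.2, h2.1, h2.2, mul_nonneg hA0 hsq]
      have hq : (0:ℝ) ≤ (2 * Cb + L * δ) / ε :=
        div_nonneg (by linarith only [hCb, mul_nonneg hL hδ0.le]) hε0.le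
      constructor
      · rw [hRdef]
        rw [Real.le_sqrt (norm_nonneg _) hq]
        rw [le_div_iff₀ hε0]
        linarith only [hab, mul_nonneg hε0.le (sq_nonneg ‖b‖)]
      · rw [hRdef]
        rw [Real.le_sqrt (norm_nonneg _) hq]
        rw [le_div_iff₀ hε0]
        linarith only [hab, mul_nonneg hε0.le (sq_nonneg ‖a‖)]
    have hSbdd : IsBounded S := by
      apply IsBounded.subset (((Metric.isBounded_Icc t₁ T).prod
        ((Metric.isBounded_closedBall (x := (0 : EuclideanSpace ℝ (Fin d))) (r := R)).prod
          (Metric.isBounded_closedBall (x := (0 : EuclideanSpace ℝ (Fin d))) (r := R)))))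
      rintro ⟨s, a, b⟩ hp
      exact ⟨hp.1, mem_closedBall_zero_iff.2 (hnormbound _ hp).1,
        mem_closedBall_zero_iff.2 (hnormbound _ hp).2⟩
    have hScpt : IsCompact S := Metric.isCompact_of_isClosed_isBounded hSclosed hSbdd
    obtain ⟨pm, hpmS, hpmmax⟩ := hScpt.exists_isMaxOn ⟨_, hTS⟩ hΦcont.continuousOn
    obtain ⟨tm, xm, ym⟩ := pm
    have hglob : ∀ p : ℝ × (EuclideanSpace ℝ (Fin d) × EuclideanSpace ℝ (Fin d)),
        p.1 ∈ Icc t₁ T → Φ p ≤ Φ (tm, (xm, ym)) := by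
      intro p hp
      by_cases hpS : p ∈ S
      · exact hpmmax hpS
      · have h1 : Φ p < Φ (T, (0, 0)) := not_le.1 (fun h => hpS ⟨hp, h⟩)
        exact h1.le.trans (hpmmax hTS)
    have htm : tm ∈ Icc t₁ T := hpmS.1
    have hmain : Φ (tm, (xm, ym)) ≤ 0 := by
      rcases eq_or_lt_of_le htm.2 with htmT | htmT
      · -- max at terminal time
        subst htmT
        simp only [hΦdef, Afun_T]
        have h1 : u tm xm - u tm ym ≤ L * ‖xm - ym‖ := by
          rw [huT, huT]; exact le_of_abs_le (hgL xm ym)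
        have h2 : ‖xm - ym‖ ≤ Real.sqrt (δ^2 + ‖xm - ym‖^2) := by
          calc ‖xm - ym‖ = Real.sqrt (‖xm - ym‖^2) := (Real.sqrt_sq (norm_nonneg _)).symm
            _ ≤ Real.sqrt (δ^2 + ‖xm - ym‖^2) := Real.sqrt_le_sqrt (by nlinarith)
        have h3 : 0 ≤ ε * (‖xm‖^2 + ‖ym‖^2) :=
          mul_nonneg hε0.le (by positivity)
        linarith only [h1, h3, mul_le_mul_of_nonneg_left h2 hL]
      · -- interior maximum: contradiction
        exfalso
        have htmIoo : tm ∈ Set.Ioo t₀ T := ⟨lt_of_lt_of_le ht₁.1 htm.1, htmT⟩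
        have htmIcc0 : tm ∈ Set.Icc t₀ T := ⟨htmIoo.1.le, htm.2⟩
        have hu2m : ContDiff ℝ 2 (u tm) := hu2 tm htmIoo
        have hdiff : Differentiable ℝ (u tm) := hu2m.differentiable (by norm_num)
        set A := Afun L K T tm with hAdef
        have hA0 : 0 ≤ A := Afun_nonneg hL hK htm.2
        set ρ := Real.sqrt (δ^2 + ‖xm - ym‖^2) with hρdef
        have hρ0 : 0 < ρ := Real.sqrt_pos.2 (by positivity)
        have hρδ : δ ≤ ρ := by
          calc δ = Real.sqrt (δ^2) := (Real.sqrt_sq hδ0.le).symm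
            _ ≤ ρ := Real.sqrt_le_sqrt (by linarith only [sq_nonneg ‖xm - ym‖])
        have hρn : ‖xm - ym‖ ≤ ρ := by
          calc ‖xm - ym‖ = Real.sqrt (‖xm - ym‖^2) := (Real.sqrt_sq (norm_nonneg _)).symm
            _ ≤ ρ := Real.sqrt_le_sqrt (by linarith only [sq_nonneg δ])
        have hρsq : ρ^2 = δ^2 + ‖xm - ym‖^2 := Real.sq_sqrt (by positivity)
        -- first-order condition in x
        have hgradx : ∀ v : EuclideanSpace ℝ (Fin d),
            fderiv ℝ (u tm) xm v = A * (⟪xm - ym, v⟫ / ρ) + ε * (2 * ⟪xm, v⟫) := by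
          intro v
          have e1 : ∀ s : ℝ, ‖xm + s • v - ym‖^2
              = ‖xm - ym‖^2 + (2 * ⟪xm - ym, v⟫) * s + ‖v‖^2 * s^2 := by
            intro s
            rw [show xm + s • v - ym = xm - ym + s • v by abel]
            exact norm_add_smul_sq _ _ _
          set F : ℝ → ℝ := fun s => u tm (xm + s • v) - u tm ym
            - A * Real.sqrt (δ^2 + (‖xm - ym‖^2 + (2 * ⟪xm - ym, v⟫) * s + ‖v‖^2 * s^2))
            - ε * ((‖xm‖^2 + (2 * ⟪xm, v⟫) * s + ‖v‖^2 * s^2) + ‖ym‖^2) with hFdef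
          have hFeq : ∀ s, F s = Φ (tm, (xm + s • v, ym)) := by
            intro s
            simp only [hFdef, hΦdef]
            rw [e1 s, norm_add_smul_sq xm v s]
          have hmaxF : IsLocalMax F 0 := by
            apply Filter.Eventually.of_forall
            intro s
            rw [hFeq s, hFeq 0]
            have h0 : xm + (0:ℝ) • v = xm := by simp
            rw [h0]
            exact hglob _ htm
          have h1 : HasDerivAt (fun s : ℝ => u tm (xm + s • v)) (fderiv ℝ (u tm) xm v) 0 := by
            have := hasDerivAt_line (u tm) xm v 0 (hdiff _)
            simpa using this
          have hq : HasDerivAt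
              (fun s : ℝ => δ^2 + (‖xm - ym‖^2 + (2 * ⟪xm - ym, v⟫) * s + ‖v‖^2 * s^2))
              ((2 * ⟪xm - ym, v⟫) + ‖v‖^2 * (2 * 0)) 0 :=
            (hasDerivAt_quad _ _ _ 0).const_add _
          have hqne : δ^2 + (‖xm - ym‖^2 + (2 * ⟪xm - ym, v⟫) * 0 + ‖v‖^2 * 0^2) ≠ 0 := by
            have h' : (0:ℝ) < δ^2 + (‖xm - ym‖^2 + (2 * ⟪xm - ym, v⟫) * 0 + ‖v‖^2 * 0^2) := by
              have h'' := pow_pos hδ0 2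
              nlinarith only [h'', sq_nonneg ‖xm - ym‖]
            exact ne_of_gt h'
          have h2 := (hq.sqrt hqne).const_mul A
          have h3 : HasDerivAt
              (fun s : ℝ => ε * ((‖xm‖^2 + (2 * ⟪xm, v⟫) * s + ‖v‖^2 * s^2) + ‖ym‖^2))
              (ε * ((2 * ⟪xm, v⟫) + ‖v‖^2 * (2 * 0))) 0 :=
            ((hasDerivAt_quad _ _ _ 0).add_const _).const_mul ε
          have hF' : HasDerivAt F (fderiv ℝ (u tm) xm v
              - A * (((2 * ⟪xm - ym, v⟫) + ‖v‖^2 * (2 * 0))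
                / (2 * Real.sqrt (δ^2 + (‖xm - ym‖^2 + (2 * ⟪xm - ym, v⟫) * 0 + ‖v‖^2 * 0^2))))
              - ε * ((2 * ⟪xm, v⟫) + ‖v‖^2 * (2 * 0))) 0 :=
            ((h1.sub_const _).sub h2).sub h3
          have hzero := hmaxF.hasDerivAt_eq_zero hF'
          have hsqrt0 : Real.sqrt (δ^2 + (‖xm - ym‖^2 + (2 * ⟪xm - ym, v⟫) * 0 + ‖v‖^2 * 0^2))
              = ρ := by
            rw [hρdef]; norm_num
          rw [hsqrt0] at hzero
          have hd : ((2 * ⟪xm - ym, v⟫) + ‖v‖^2 * (2 * 0)) / (2 * ρ) = ⟪xm - ym, v⟫ / ρ := by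
            field_simp
            ring
          rw [hd] at hzero
          linarith [hzero]
        -- first-order condition in y
        have hgrady : ∀ v : EuclideanSpace ℝ (Fin d),
            fderiv ℝ (u tm) ym v = A * (⟪xm - ym, v⟫ / ρ) - ε * (2 * ⟪ym, v⟫) := by
          intro v
          have e1 : ∀ s : ℝ, ‖xm - (ym + s • v)‖^2
              = ‖xm - ym‖^2 + (2 * ⟪xm - ym, -v⟫) * s + ‖-v‖^2 * s^2 := by
            intro s
            rw [show xm - (ym + s • v) = xm - ym + s • (-v) by rw [smul_neg]; abel]
            exact norm_add_smul_sq _ _ _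
          set F : ℝ → ℝ := fun s => u tm xm - u tm (ym + s • v)
            - A * Real.sqrt (δ^2 + (‖xm - ym‖^2 + (2 * ⟪xm - ym, -v⟫) * s + ‖-v‖^2 * s^2))
            - ε * (‖xm‖^2 + (‖ym‖^2 + (2 * ⟪ym, v⟫) * s + ‖v‖^2 * s^2)) with hFdef
          have hFeq : ∀ s, F s = Φ (tm, (xm, ym + s • v)) := by
            intro s
            simp only [hFdef, hΦdef]
            rw [e1 s, norm_add_smul_sq ym v s]
          have hmaxF : IsLocalMax F 0 := by
            apply Filter.Eventually.of_forall
            intro s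
            rw [hFeq s, hFeq 0]
            have h0 : ym + (0:ℝ) • v = ym := by simp
            rw [h0]
            exact hglob _ htm
          have h1 : HasDerivAt (fun s : ℝ => u tm xm - u tm (ym + s • v))
              (-(fderiv ℝ (u tm) ym v)) 0 := by
            have h1' := hasDerivAt_line (u tm) ym v 0 (hdiff _)
            have := h1'.const_sub (u tm xm)
            simpa using this
          have hq : HasDerivAt
              (fun s : ℝ => δ^2 + (‖xm - ym‖^2 + (2 * ⟪xm - ym, -v⟫) * s + ‖-v‖^2 * s^2))
              ((2 * ⟪xm - ym, -v⟫) + ‖-v‖^2 * (2 * 0)) 0 :=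
            (hasDerivAt_quad _ _ _ 0).const_add _
          have hqne : δ^2 + (‖xm - ym‖^2 + (2 * ⟪xm - ym, -v⟫) * 0 + ‖-v‖^2 * 0^2) ≠ 0 := by
            have h' : (0:ℝ) < δ^2 + (‖xm - ym‖^2 + (2 * ⟪xm - ym, -v⟫) * 0 + ‖-v‖^2 * 0^2) := by
              have h'' := pow_pos hδ0 2
              nlinarith only [h'', sq_nonneg ‖xm - ym‖]
            exact ne_of_gt h'
          have h2 := (hq.sqrt hqne).const_mul A
          have h3 : HasDerivAt
              (fun s : ℝ => ε * (‖xm‖^2 + (‖ym‖^2 + (2 * ⟪ym, v⟫) * s + ‖v‖^2 * s^2)))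
              (ε * ((2 * ⟪ym, v⟫) + ‖v‖^2 * (2 * 0))) 0 :=
            ((hasDerivAt_quad _ _ _ 0).const_add _).const_mul ε
          have hF' : HasDerivAt F (-(fderiv ℝ (u tm) ym v)
              - A * (((2 * ⟪xm - ym, -v⟫) + ‖-v‖^2 * (2 * 0))
                / (2 * Real.sqrt (δ^2 + (‖xm - ym‖^2 + (2 * ⟪xm - ym, -v⟫) * 0 + ‖-v‖^2 * 0^2))))
              - ε * ((2 * ⟪ym, v⟫) + ‖v‖^2 * (2 * 0))) 0 :=
            (h1.sub h2).sub h3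
          have hzero := hmaxF.hasDerivAt_eq_zero hF'
          have hsqrt0 : Real.sqrt (δ^2 + (‖xm - ym‖^2 + (2 * ⟪xm - ym, -v⟫) * 0 + ‖-v‖^2 * 0^2))
              = ρ := by
            rw [hρdef]; norm_num
          rw [hsqrt0] at hzero
          have hinn : ⟪xm - ym, -v⟫ = -⟪xm - ym, v⟫ := by
            rw [inner_neg_right]
          rw [hinn] at hzero
          have hd : ((2 * -⟪xm - ym, v⟫) + ‖-v‖^2 * (2 * 0)) / (2 * ρ) = -(⟪xm - ym, v⟫ / ρ) := by
            field_simp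
            ring
          rw [hd] at hzero
          linarith [hzero]
        -- second-order condition
        have hlapl : lapl (u tm) xm - lapl (u tm) ym ≤ 4 * (d:ℝ) * ε := by
          have hper : ∀ i : Fin d,
              iteratedFDeriv ℝ 2 (u tm) xm
                  ![EuclideanSpace.single i 1, EuclideanSpace.single i 1]
                - iteratedFDeriv ℝ 2 (u tm) ym
                  ![EuclideanSpace.single i 1, EuclideanSpace.single i 1] ≤ 4 * ε := by
            intro i
            set v : EuclideanSpace ℝ (Fin d) := EuclideanSpace.single i (1:ℝ) with hvdef
            have hv2 : ‖v‖^2 = 1 := by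
              rw [hvdef, EuclideanSpace.norm_single]; norm_num
            have e0 : ∀ s : ℝ, xm + s • v - (ym + s • v) = xm - ym := fun s => by abel
            set Cf : ℝ → ℝ := fun s => u tm (xm + s • v) - u tm (ym + s • v) - A * ρ
              - ε * ((‖xm‖^2 + (2 * ⟪xm, v⟫) * s + ‖v‖^2 * s^2)
                  + (‖ym‖^2 + (2 * ⟪ym, v⟫) * s + ‖v‖^2 * s^2)) with hCdef
            have hCeq : ∀ s, Cf s = Φ (tm, (xm + s • v, ym + s • v)) := by
              intro s
              simp only [hCdef, hΦdef]
              rw [e0 s, norm_add_smul_sq xm v s, norm_add_smul_sq ym v s, hρdef]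
            have hmaxC : IsLocalMax Cf 0 := by
              apply Filter.Eventually.of_forall
              intro s
              rw [hCeq s, hCeq 0]
              simp only [zero_smul, add_zero]
              exact hglob _ htm
            set D1 : ℝ → ℝ := fun s =>
              fderiv ℝ (u tm) (xm + s • v) v - fderiv ℝ (u tm) (ym + s • v) v
              - ε * (((2 * ⟪xm, v⟫) + ‖v‖^2 * (2 * s)) + ((2 * ⟪ym, v⟫) + ‖v‖^2 * (2 * s)))
              with hD1def
            have hD : ∀ s, HasDerivAt Cf (D1 s) s := by
              intro s
              have hx := hasDerivAt_line (u tm) xm v s (hdiff _)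
              have hy := hasDerivAt_line (u tm) ym v s (hdiff _)
              have hq1 := hasDerivAt_quad (‖xm‖^2) (2 * ⟪xm, v⟫) (‖v‖^2) s
              have hq2 := hasDerivAt_quad (‖ym‖^2) (2 * ⟪ym, v⟫) (‖v‖^2) s
              exact (((hx.sub hy).sub_const (A * ρ)).sub ((hq1.add hq2).const_mul ε))
            have hD2 : HasDerivAt D1
                (iteratedFDeriv ℝ 2 (u tm) xm ![v, v] - iteratedFDeriv ℝ 2 (u tm) ym ![v, v]
                  - ε * ((‖v‖^2 * 2) + (‖v‖^2 * 2))) 0 := by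
              have h2x := hasDerivAt_line2 (u tm) hu2m xm v
              have h2y := hasDerivAt_line2 (u tm) hu2m ym v
              have hs2 : HasDerivAt (fun s : ℝ => 2 * s) 2 0 := by
                simpa using (hasDerivAt_id (0:ℝ)).const_mul 2
              have hl1 : HasDerivAt (fun s : ℝ => (2 * ⟪xm, v⟫) + ‖v‖^2 * (2 * s))
                  (‖v‖^2 * 2) 0 := (hs2.const_mul (‖v‖^2)).const_add _
              have hl2 : HasDerivAt (fun s : ℝ => (2 * ⟪ym, v⟫) + ‖v‖^2 * (2 * s))
                  (‖v‖^2 * 2) 0 := (hs2.const_mul (‖v‖^2)).const_add _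
              exact (h2x.sub h2y).sub (((hl1.add hl2)).const_mul ε)
            have hsec := second_deriv_nonpos_at_max hD hD2 hmaxC
            rw [hv2] at hsec
            have : iteratedFDeriv ℝ 2 (u tm) xm ![v, v]
                - iteratedFDeriv ℝ 2 (u tm) ym ![v, v] ≤ 4 * ε := by linarith
            simpa [hvdef] using this
          unfold lapl
          rw [← Finset.sum_sub_distrib]
          calc (∑ i : Fin d, (iteratedFDeriv ℝ 2 (u tm) xm
                  ![EuclideanSpace.single i 1, EuclideanSpace.single i 1]
                - iteratedFDeriv ℝ 2 (u tm) ym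
                  ![EuclideanSpace.single i 1, EuclideanSpace.single i 1]))
              ≤ ∑ i : Fin d, 4 * ε := Finset.sum_le_sum (fun i _ => hper i)
            _ = 4 * (d:ℝ) * ε := by
              rw [Finset.sum_const, Finset.card_univ, Fintype.card_fin]
              simp [nsmul_eq_mul]
              ring
        -- time condition
        set A' := -((L + 1) + K * (L + (L + 1) * (T - tm))) * Real.exp (K * (T - tm))
          with hA'def
        have hφT : HasDerivAt
            (fun s => u s xm - u s ym - Afun L K T s * ρ - ε * (‖xm‖^2 + ‖ym‖^2))
            (ut tm xm - ut tm ym - A' * ρ) tm := by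
          have h1 := hut tm htmIoo xm
          have h2 := hut tm htmIoo ym
          have h3 := (Afun_hasDerivAt L K T tm).mul_const ρ
          exact ((h1.sub h2).sub h3).sub_const _
        have hφeq : ∀ s, u s xm - u s ym - Afun L K T s * ρ - ε * (‖xm‖^2 + ‖ym‖^2)
            = Φ (s, (xm, ym)) := by
          intro s
          simp only [hΦdef, hρdef]
        have hφTmax : ∀ s ∈ Icc tm T,
            (fun s => u s xm - u s ym - Afun L K T s * ρ - ε * (‖xm‖^2 + ‖ym‖^2)) s
            ≤ (fun s => u s xm - u s ym - Afun L K T s * ρ - ε * (‖xm‖^2 + ‖ym‖^2)) tm := by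
          intro s hs
          have h1 : Φ (s, (xm, ym)) ≤ Φ (tm, (xm, ym)) :=
            hglob _ ⟨le_trans htm.1 hs.1, hs.2⟩
          rw [← hφeq s, ← hφeq tm] at h1
          exact h1
        have hc := right_deriv_nonpos htmT hφT hφTmax
        -- PDE at the two points
        have hpdex := hpde tm htmIoo xm
        have hpdey := hpde tm htmIoo ym
        rw [inner_grad, hgradx (V tm xm)] at hpdex
        rw [inner_grad, hgrady (V tm ym)] at hpdey
        -- bounds
        have hxmR : ‖xm‖ ≤ R := (hnormbound _ hpmS).1
        have hymR : ‖ym‖ ≤ R := (hnormbound _ hpmS).2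
        -- b1 : f-difference
        have b1 : f tm xm - f tm ym ≤ L * ρ := by
          have h := (abs_le.1 (hfL tm htmIcc0 xm ym)).2
          linarith only [h, mul_le_mul_of_nonneg_left hρn hL]
        -- b3 : inner product difference bound
        have b3 : -(K * (A * ρ)) ≤ A * ((⟪xm - ym, V tm xm⟫ - ⟪xm - ym, V tm ym⟫) / ρ) := by
          have hi : ⟪xm - ym, V tm xm⟫ - ⟪xm - ym, V tm ym⟫
              = ⟪xm - ym, V tm xm - V tm ym⟫ := (inner_sub_right _ _ _).symm
          have habs := abs_real_inner_le_norm (xm - ym) (V tm xm - V tm ym)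
          have hVd := hVK tm htmIcc0 xm ym
          have hlow : -(K * ρ^2) ≤ ⟪xm - ym, V tm xm⟫ - ⟪xm - ym, V tm ym⟫ := by
            rw [hi]
            have h1 : |⟪xm - ym, V tm xm - V tm ym⟫| ≤ K * ρ^2 := by
              calc |⟪xm - ym, V tm xm - V tm ym⟫| ≤ ‖xm - ym‖ * ‖V tm xm - V tm ym‖ := habs
                _ ≤ ρ * (K * ρ) := by
                    apply mul_le_mul hρn _ (norm_nonneg _) hρ0.le
                    calc ‖V tm xm - V tm ym‖ ≤ K * ‖xm - ym‖ := hVd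
                      _ ≤ K * ρ := mul_le_mul_of_nonneg_left hρn hK
                _ = K * ρ^2 := by ring
            linarith [(abs_le.1 h1).1]
          have hdiv : -(K * ρ^2) / ρ ≤ (⟪xm - ym, V tm xm⟫ - ⟪xm - ym, V tm ym⟫) / ρ :=
            (div_le_div_iff_of_pos_right hρ0).2 hlow
          have heq : -(K * ρ^2) / ρ = -(K * ρ) := by field_simp
          rw [heq] at hdiv
          calc -(K * (A * ρ)) = A * (-(K * ρ)) := by ring
            _ ≤ A * ((⟪xm - ym, V tm xm⟫ - ⟪xm - ym, V tm ym⟫) / ρ) :=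
              mul_le_mul_of_nonneg_left hdiv hA0
        have hsplit : A * (⟪xm - ym, V tm xm⟫ / ρ) - A * (⟪xm - ym, V tm ym⟫ / ρ)
            = A * ((⟪xm - ym, V tm xm⟫ - ⟪xm - ym, V tm ym⟫) / ρ) := by ring
        -- b4, b5 : barrier inner product bounds
        have b4 : -(M * R) ≤ ⟪xm, V tm xm⟫ := by
          have h1 := abs_real_inner_le_norm xm (V tm xm)
          have h2 := hVb tm xm
          have h3 := (abs_le.1 h1).1
          linarith only [h3, mul_le_mul hxmR h2 (norm_nonneg _) hR0]
        have b5 : -(M * R) ≤ ⟪ym, V tm ym⟫ := by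
          have h1 := abs_real_inner_le_norm ym (V tm ym)
          have h2 := hVb tm ym
          have h3 := (abs_le.1 h1).1
          linarith only [h3, mul_le_mul hymR h2 (norm_nonneg _) hR0]
        have c4x : -(2 * (M * (ε * R))) ≤ ε * (2 * ⟪xm, V tm xm⟫) := by
          have h0 : (0:ℝ) ≤ ⟪xm, V tm xm⟫ + M * R := by linarith only [b4]
          linarith only [mul_nonneg hε0.le h0]
        have c4y : -(2 * (M * (ε * R))) ≤ ε * (2 * ⟪ym, V tm ym⟫) := by
          have h0 : (0:ℝ) ≤ ⟪ym, V tm ym⟫ + M * R := by linarith only [b5]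
          linarith only [mul_nonneg hε0.le h0]
        -- the εR bound
        have bW : ε * R ≤ δ / (8 * (M + 1)) := by
          have hq : (0:ℝ) ≤ (2 * Cb + L * δ) / ε :=
            div_nonneg (by linarith only [hCb, mul_nonneg hL hδ0.le]) hε0.le
          have h1 : (ε * R)^2 = ε * (2 * Cb + L * δ) := by
            rw [hRdef, mul_pow, Real.sq_sqrt hq]
            field_simp
          have h2 : (ε * R)^2 ≤ (δ / (8 * (M + 1)))^2 := by
            rw [h1]
            have h3 : ε * (2 * Cb + L * δ) ≤ ε * B := by
              apply mul_le_mul_of_nonneg_left _ hε0.le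
              rw [hBdef]
              linarith only [mul_le_mul_of_nonneg_left hδ1 hL]
            have h4 : ε * B ≤ δ^2 / (64 * (M + 1)^2) := by
              have := mul_le_mul_of_nonneg_right hε2 hB.le
              calc ε * B ≤ δ^2 / (64 * (M+1)^2 * B) * B := this
                _ = δ^2 / (64 * (M + 1)^2) := by field_simp
            have h5 : δ^2 / (64 * (M + 1)^2) = (δ / (8 * (M + 1)))^2 := by
              field_simp; ring
            exact h3.trans (h4.trans h5.le)
          have h6 : 0 ≤ ε * R := mul_nonneg hε0.le hR0
          have h7 : (0:ℝ) ≤ δ / (8 * (M + 1)) := by positivity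
          have h8 := Real.sqrt_le_sqrt h2
          rw [Real.sqrt_sq h6, Real.sqrt_sq h7] at h8
          exact h8
        have cWtot : 4 * (M * (ε * R)) ≤ δ / 2 := by
          have h1 : M * (ε * R) ≤ M * (δ / (8 * (M + 1))) :=
            mul_le_mul_of_nonneg_left bW hM
          have h2 : 4 * (M * (δ / (8 * (M + 1)))) ≤ δ / 2 := by
            rw [show 4 * (M * (δ / (8 * (M + 1)))) = (4 * M * δ) / (8 * (M + 1)) by ring]
            rw [div_le_div_iff₀ (by positivity) (by norm_num : (0:ℝ) < 2)]
            nlinarith only [hδ0, mul_nonneg hM hδ0.le]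
          linarith only [h1, h2]
        have c4d : 4 * (d:ℝ) * ε < δ / 2 := by
          have hd8 : (0:ℝ) < 8 * (d:ℝ) + 8 := by positivity
          have h1 : 4 * (d:ℝ) * ε ≤ 4 * (d:ℝ) * (δ / (8 * (d:ℝ) + 8)) := by
            apply mul_le_mul_of_nonneg_left hε1 (by positivity)
          have h2 : 4 * (d:ℝ) * (δ / (8 * (d:ℝ) + 8)) < δ / 2 := by
            rw [show 4 * (d:ℝ) * (δ / (8 * (d:ℝ) + 8)) = (4 * (d:ℝ) * δ) / (8 * (d:ℝ) + 8) by
              ring]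
            rw [div_lt_div_iff₀ hd8 (by norm_num : (0:ℝ) < 2)]
            nlinarith only [hδ0, mul_nonneg (Nat.cast_nonneg d : (0:ℝ) ≤ (d:ℝ)) hδ0.le]
          exact lt_of_le_of_lt h1 h2
        -- A' bound
        have hA'key : A' ≤ -(K * A + L + 1) := Afun_deriv_key hL hK htm.2
        have hA'ρ : A' * ρ ≤ -(K * (A * ρ)) - L * ρ - ρ := by
          have h9 := mul_le_mul_of_nonneg_right hA'key hρ0.le
          linarith only [h9]
        -- final contradiction
        linarith only [hpdex, hpdey, hc, hsplit, b3, b1, hlapl, c4x, c4y, hA'ρ, cWtot, c4d,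
          hρδ]
    -- conclude the approximate bound
    have hfin := (hglob (t₁, (x₀, y₀)) ⟨le_refl t₁, ht₁.2.le⟩).trans hmain
    have hAt₁ : Afun L K T t₁ ≤ Am := Afun_le hL hK ht₁.1.le ht₁.2.le
    have hAt₁0 : 0 ≤ Afun L K T t₁ := Afun_nonneg hL hK ht₁.2.le
    have hsq : Real.sqrt (δ^2 + ‖x₀ - y₀‖^2) ≤ δ + ‖x₀ - y₀‖ := by
      have h1 : δ^2 + ‖x₀ - y₀‖^2 ≤ (δ + ‖x₀ - y₀‖)^2 := by
        nlinarith [norm_nonneg (x₀ - y₀), hδ0.le]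
      calc Real.sqrt (δ^2 + ‖x₀ - y₀‖^2) ≤ Real.sqrt ((δ + ‖x₀ - y₀‖)^2) :=
            Real.sqrt_le_sqrt h1
        _ = δ + ‖x₀ - y₀‖ := Real.sqrt_sq (by positivity)
    simp only [hΦdef] at hfin
    have hb1 : Afun L K T t₁ * Real.sqrt (δ^2 + ‖x₀ - y₀‖^2) ≤ Am * ‖x₀ - y₀‖ + η / 2 := by
      have s1 : Afun L K T t₁ * Real.sqrt (δ^2 + ‖x₀ - y₀‖^2)
          ≤ Afun L K T t₁ * (δ + ‖x₀ - y₀‖) := mul_le_mul_of_nonneg_left hsq hAt₁0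
      have s2 : Afun L K T t₁ * (δ + ‖x₀ - y₀‖) ≤ Am * (δ + ‖x₀ - y₀‖) := by
        apply mul_le_mul_of_nonneg_right hAt₁
        positivity
      have s3 : Am * δ ≤ η / 2 := by
        have h4 : (Am + 1) * δ ≤ (Am + 1) * (η / (2 * (Am + 1))) :=
          mul_le_mul_of_nonneg_left hδη (by linarith only [hAm])
        have h5 : (Am + 1) * (η / (2 * (Am + 1))) = η / 2 := by
          field_simp
        linarith only [h4, h5, hδ0.le]
      linarith only [s1, s2, s3]
    have hb2 : ε * (‖x₀‖^2 + ‖y₀‖^2) ≤ η / 2 := by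
      set s := ‖x₀‖^2 + ‖y₀‖^2 with hsdef
      have hs0 : 0 ≤ s := by positivity
      have h1 : ε * s ≤ (η / (2 * (s + 1))) * s := mul_le_mul_of_nonneg_right hε3 hs0
      have h2 : (η / (2 * (s + 1))) * s ≤ η / 2 := by
        rw [div_mul_eq_mul_div, div_le_div_iff₀ (by positivity) (by norm_num : (0:ℝ) < 2)]
        nlinarith only [hη, hs0, mul_nonneg hη.le hs0]
      linarith only [h1, h2]
    linarith only [hfin, hb1, hb2]
  -- assemble
  have habs : ∀ t ∈ Set.Ioo t₀ T, ∀ x y : EuclideanSpace ℝ (Fin d),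
      |u t x - u t y| ≤ (Am + 1) * ‖x - y‖ := by
    intro t htI x y
    have h1 := key t htI x y
    have h2 := key t htI y x
    rw [norm_sub_rev] at h2
    have hn : (0:ℝ) ≤ ‖x - y‖ := norm_nonneg _
    rw [abs_sub_le_iff]
    constructor <;> linarith only [h1, h2, hn]
  intro t htI x y
  rcases eq_or_lt_of_le htI.2 with hT | hT
  · rw [hT, huT, huT]
    have hn : (0:ℝ) ≤ ‖x - y‖ := norm_nonneg _
    have hLAm : L ≤ Am := by
      have h := Afun_le hL hK ht.le (le_refl T)
      rw [Afun_T] at h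
      exact h
    calc |g x - g y| ≤ L * ‖x - y‖ := hgL x y
      _ ≤ (Am + 1) * ‖x - y‖ :=
        mul_le_mul_of_nonneg_right (by linarith only [hLAm]) hn
  rcases eq_or_lt_of_le htI.1 with ht0 | ht0
  · obtain rfl := ht0
    have hcont : Continuous (fun s => |u s x - u s y|) := by
      have c1 : Continuous (fun s : ℝ => u s x) :=
        hucont.comp (continuous_id.prodMk continuous_const)
      have c2 : Continuous (fun s : ℝ => u s y) :=
        hucont.comp (continuous_id.prodMk continuous_const)
      exact (c1.sub c2).abs
    have hten : Tendsto (fun s => |u s x - u s y|) (𝓝[>] t₀) (𝓝 (|u t₀ x - u t₀ y|)) :=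
      (hcont.tendsto t₀).mono_left nhdsWithin_le_nhds
    refine le_of_tendsto hten ?_
    filter_upwards [Ioo_mem_nhdsGT_of_mem ⟨le_refl t₀, hT⟩] with s hs
    exact habs s hs x y
  · exact habs t ⟨ht0, hT⟩ x y
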